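/- Let μ be a σ-finite measure on E and let p, r : E × Θ → (0,∞) be densities with θ ↦ p(x,θ) and θ ↦ r(x,θ) differentiable in θ for μ-almost all x, with partial derivatives p', r'. Set s = p + r. Then ∫ s'(x,θ)²/s(x,θ) dμ(x) ≤ ∫ p'(x,θ)²/p(x,θ) dμ(x) + ∫ r'(x,θ)²/r(x,θ) dμ(x). -/
import Mathlib


open MeasureTheory

lemma ptwise (a b P R : ℝ) (hP : 0 < P) (hR : 0 < R) :
    (a + b) ^ 2 / (P + R) ≤ a ^ 2 / P + b ^ 2 / R := by
  rw [div_add_div _ _ hP.ne' hR.ne', div_le_div_iff₀ (by positivity) (by positivity)]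
  nlinarith [sq_nonneg (a * R - b * P), sq_nonneg a, sq_nonneg b, mul_pos hP hR]

/-- Subadditivity of Fisher information under mixture of densities. -/
theorem stmt0 {E : Type*} [MeasurableSpace E] (μ : Measure E) [SigmaFinite μ]
    (p r p' r' : E → ℝ → ℝ) (θ : ℝ)
    (hp : ∀ᵐ x ∂μ, 0 < p x θ ∧ HasDerivAt (p x) (p' x θ) θ)
    (hr : ∀ᵐ x ∂μ, 0 < r x θ ∧ HasDerivAt (r x) (r' x θ) θ)
    (hip : Integrable (fun x => (p' x θ) ^ 2 / p x θ) μ)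
    (hir : Integrable (fun x => (r' x θ) ^ 2 / r x θ) μ) :
    ∫ x, (p' x θ + r' x θ) ^ 2 / (p x θ + r x θ) ∂μ
      ≤ (∫ x, (p' x θ) ^ 2 / p x θ ∂μ) + ∫ x, (r' x θ) ^ 2 / r x θ ∂μ := by
  have hae : ∀ᵐ x ∂μ, (p' x θ + r' x θ) ^ 2 / (p x θ + r x θ)
      ≤ (p' x θ) ^ 2 / p x θ + (r' x θ) ^ 2 / r x θ := by
    filter_upwards [hp, hr] with x ⟨hpx, _⟩ ⟨hrx, _⟩
    exact ptwise _ _ _ _ hpx hrx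
  by_cases hL : Integrable (fun x => (p' x θ + r' x θ) ^ 2 / (p x θ + r x θ)) μ
  · rw [← integral_add hip hir]
    exact integral_mono_ae hL (hip.add hir) hae
  · rw [integral_undef hL]
    have h1 : 0 ≤ ∫ x, (p' x θ) ^ 2 / p x θ ∂μ :=
      integral_nonneg_of_ae <| by
        filter_upwards [hp] with x ⟨hpx, _⟩; positivity
    have h2 : 0 ≤ ∫ x, (r' x θ) ^ 2 / r x θ ∂μ :=
      integral_nonneg_of_ae <| by
        filter_upwards [hr] with x ⟨hrx, _⟩; positivity
    linarith
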